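/- The equation φ(x) = Σ_{n∈ℕ} p_n φ(f_n(x)) + g(x) (x ∈ [0,1]) has a bounded solution φ : [0,1] → ℝ if and only if the family {g_k : k ≥ 1} is bounded in the supremum norm. Moreover, if this family is bounded, then a bounded φ : [0,1] → ℝ is a solution of this equation if and only if φ = B_h + B_* for some Banach limit B and some bounded h : [0,1] → ℝ. -/

import Mathlib

open MeasureTheory unitInterval

noncomputable section

/-- A bounded real sequence. -/
def IsBddSeq (x : ℕ → ℝ) : Prop := ∃ C : ℝ, ∀ n, |x n| ≤ C

/-- A Banach limit: a linear (on bounded sequences), positive, shift-invariant and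
normalized functional on the space of bounded real sequences. -/
structure BanachLimit where
  toFun : (ℕ → ℝ) → ℝ
  map_add : ∀ x y : ℕ → ℝ, IsBddSeq x → IsBddSeq y →
    toFun (fun n => x n + y n) = toFun x + toFun y
  map_smul : ∀ (c : ℝ) (x : ℕ → ℝ), IsBddSeq x →
    toFun (fun n => c * x n) = c * toFun x
  nonneg : ∀ x : ℕ → ℝ, IsBddSeq x → (∀ n, 0 ≤ x n) → 0 ≤ toFun x
  shift : ∀ x : ℕ → ℝ, IsBddSeq x → toFun (fun n => x (n + 1)) = toFun x
  norm_one : toFun (fun _ => (1 : ℝ)) = 1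

/-- A medial limit with respect to a measure `P`: a Banach limit which commutes with
integration of uniformly bounded sequences of measurable functions. -/
def BanachLimit.IsMedial {Ω : Type*} [MeasurableSpace Ω] (B : BanachLimit)
    (P : Measure Ω) : Prop :=
  ∀ h : ℕ → Ω → ℝ, (∃ C : ℝ, ∀ m ω, |h m ω| ≤ C) → (∀ m, Measurable (h m)) →
    Measurable (fun ω => B.toFun (fun m => h m ω)) ∧
      ∫ ω, B.toFun (fun m => h m ω) ∂P = B.toFun (fun m => ∫ ω, h m ω ∂P)

/-- The operator `T`, `(Th)(x) = ∫_Ω h(f(x,ω)) dP(ω)`. -/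
def Tof {Ω : Type*} [MeasurableSpace Ω] (P : Measure Ω)
    (f : unitInterval → Ω → unitInterval) (h : unitInterval → ℝ) :
    unitInterval → ℝ :=
  fun x => ∫ ω, h (f x ω) ∂P

/-- The supremum norm of a function on `[0,1]`. -/
def supNorm (h : unitInterval → ℝ) : ℝ := ⨆ x, |h x|

/-- Membership in `𝓜([0,1],ℝ)`: `h` is bounded and `ω ↦ h (f x ω)` is measurable
for every `x`. -/
def MemM {Ω : Type*} [MeasurableSpace Ω]
    (f : unitInterval → Ω → unitInterval) (h : unitInterval → ℝ) : Prop :=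
  (∃ C : ℝ, ∀ x, |h x| ≤ C) ∧ ∀ x, Measurable fun ω => h (f x ω)

/-- The function `B_h(x) = B((T^m h(x))_{m ≥ 1})`. -/
def BLof {Ω : Type*} [MeasurableSpace Ω] (P : Measure Ω)
    (f : unitInterval → Ω → unitInterval) (B : BanachLimit)
    (h : unitInterval → ℝ) : unitInterval → ℝ :=
  fun x => B.toFun fun m => (Tof P f)^[m + 1] h x

/-- The function `g_k = Σ_{l=0}^{k-1} T^l g` (meaningful for `k ≥ 1`). -/
def gk {Ω : Type*} [MeasurableSpace Ω] (P : Measure Ω)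
    (f : unitInterval → Ω → unitInterval) (g : unitInterval → ℝ) (k : ℕ) :
    unitInterval → ℝ :=
  fun x => ∑ l ∈ Finset.range k, (Tof P f)^[l] g x

/-- The family `𝒢 = {g_k : k ≥ 1}` is bounded in the supremum norm. -/
def GBdd {Ω : Type*} [MeasurableSpace Ω] (P : Measure Ω)
    (f : unitInterval → Ω → unitInterval) (g : unitInterval → ℝ) : Prop :=
  ∃ C : ℝ, ∀ k : ℕ, 1 ≤ k → ∀ x, |gk P f g k x| ≤ C

/-- The function `B_*(x) = B((g_k(x))_{k ≥ 1})`. -/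
def BStar {Ω : Type*} [MeasurableSpace Ω] (P : Measure Ω)
    (f : unitInterval → Ω → unitInterval) (B : BanachLimit)
    (g : unitInterval → ℝ) : unitInterval → ℝ :=
  fun x => B.toFun fun k => gk P f g (k + 1) x

/-- `φ` satisfies equation (E_g): `ω ↦ φ(f(x,ω))` is measurable for every `x` and
`φ(x) = ∫_Ω φ(f(x,ω)) dP(ω) + g(x)` for every `x`. -/
def SatEq {Ω : Type*} [MeasurableSpace Ω] (P : Measure Ω)
    (f : unitInterval → Ω → unitInterval) (g φ : unitInterval → ℝ) : Prop :=
  (∀ x, Measurable fun ω => φ (f x ω)) ∧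
    ∀ x, φ x = (∫ ω, φ (f x ω) ∂P) + g x

/-- The class `𝓑_a^b` is closed under the Banach limit `B`. -/
def ClosedUnder {Ω : Type*} [MeasurableSpace Ω] (P : Measure Ω)
    (f : unitInterval → Ω → unitInterval) (𝓑 : Submodule ℝ (unitInterval → ℝ))
    (a b : ℝ) (B : BanachLimit) : Prop :=
  ∀ h : unitInterval → ℝ, h ∈ 𝓑 → h 0 = a → h 1 = b →
    BLof P f B h ∈ 𝓑 ∧ BLof P f B h 0 = a ∧ BLof P f B h 1 = b

/-- The operator `T` in the discrete setting: `(Th)(x) = Σ_n p_n h(f_n(x))`. -/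
def Tseq (p : ℕ → ℝ) (fn : ℕ → unitInterval → unitInterval)
    (h : unitInterval → ℝ) : unitInterval → ℝ :=
  fun x => ∑' n, p n * h (fn n x)

/-- `g_k = Σ_{l=0}^{k-1} T^l g` in the discrete setting. -/
def gkSeq (p : ℕ → ℝ) (fn : ℕ → unitInterval → unitInterval)
    (g : unitInterval → ℝ) (k : ℕ) : unitInterval → ℝ :=
  fun x => ∑ l ∈ Finset.range k, (Tseq p fn)^[l] g x

open Filter

namespace BLConstruction

def bddSub : Submodule ℝ (ℕ → ℝ) where
  carrier := {x | IsBddSeq x}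
  add_mem' := by
    rintro x y ⟨C, hC⟩ ⟨D, hD⟩
    exact ⟨C + D, fun n => (abs_add_le _ _).trans (add_le_add (hC n) (hD n))⟩
  zero_mem' := ⟨0, fun n => by simp⟩
  smul_mem' := by
    rintro c x ⟨C, hC⟩
    refine ⟨|c| * C, fun n => ?_⟩
    rw [Pi.smul_apply, smul_eq_mul, abs_mul]
    exact mul_le_mul_of_nonneg_left (hC n) (abs_nonneg c)

def avgSeq (x : ℕ → ℝ) (n : ℕ) : ℝ := (∑ k ∈ Finset.range (n + 1), x k) / ((n : ℝ) + 1)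

lemma avgSeq_abs_le {x : ℕ → ℝ} {C : ℝ} (h : ∀ n, |x n| ≤ C) (n : ℕ) : |avgSeq x n| ≤ C := by
  have hpos : (0 : ℝ) < (n : ℝ) + 1 := by positivity
  have h1 : |∑ k ∈ Finset.range (n + 1), x k| ≤ ((n : ℝ) + 1) * C := by
    calc |∑ k ∈ Finset.range (n + 1), x k| ≤ ∑ k ∈ Finset.range (n + 1), |x k| :=
          Finset.abs_sum_le_sum_abs _ _
      _ ≤ ∑ _k ∈ Finset.range (n + 1), C := Finset.sum_le_sum fun k _ => h k
      _ = ((n : ℝ) + 1) * C := by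
          rw [Finset.sum_const, Finset.card_range, nsmul_eq_mul]; push_cast; ring
  rw [avgSeq, abs_div, abs_of_pos hpos, div_le_iff₀ hpos]
  linarith [h1]

lemma avgSeq_add (x y : ℕ → ℝ) : avgSeq (x + y) = avgSeq x + avgSeq y := by
  funext n
  simp only [avgSeq, Pi.add_apply, Finset.sum_add_distrib]
  ring

lemma avgSeq_smul (c : ℝ) (x : ℕ → ℝ) : avgSeq (c • x) = fun n => c * avgSeq x n := by
  funext n
  simp only [avgSeq, Pi.smul_apply, smul_eq_mul, ← Finset.mul_sum]
  ring

lemma bddAbove_avg (x : bddSub) : IsBoundedUnder (· ≤ ·) atTop (avgSeq x.1) := by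
  obtain ⟨C, hC⟩ := x.2
  exact isBoundedUnder_of ⟨C, fun n => (abs_le.1 (avgSeq_abs_le hC n)).2⟩

lemma bddBelow_avg (x : bddSub) : IsBoundedUnder (· ≥ ·) atTop (avgSeq x.1) := by
  obtain ⟨C, hC⟩ := x.2
  exact isBoundedUnder_of ⟨-C, fun n => (abs_le.1 (avgSeq_abs_le hC n)).1⟩

def N (x : bddSub) : ℝ := limsup (avgSeq x.1) atTop

lemma N_le {x : bddSub} {C : ℝ} (h : ∀ n, |x.1 n| ≤ C) : N x ≤ C :=
  limsup_le_of_le (bddBelow_avg x).isCoboundedUnder_le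
    (Eventually.of_forall fun n => (abs_le.1 (avgSeq_abs_le h n)).2)

lemma N_add (x y : bddSub) : N (x + y) ≤ N x + N y := by
  have hxy : avgSeq ((x + y) : bddSub).1 = avgSeq x.1 + avgSeq y.1 := avgSeq_add _ _
  rw [N, hxy]
  exact limsup_add_le (bddBelow_avg x) (bddAbove_avg x)
    (bddBelow_avg y).isCoboundedUnder_le (bddAbove_avg y)

lemma N_smul (c : ℝ) (hc : 0 < c) (x : bddSub) : N (c • x) = c * N x := by
  have hxy : avgSeq ((c • x) : bddSub).1 = fun n => c * avgSeq x.1 n := avgSeq_smul _ _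
  rw [N, hxy, N]
  have := OrderIso.limsup_apply (OrderIso.mulLeft₀ c hc) (u := avgSeq x.1) (f := atTop)
    (bddAbove_avg x) (bddBelow_avg x).isCoboundedUnder_le ?_ ?_
  · simpa using this.symm
  · obtain ⟨C, hC⟩ := x.2
    exact isBoundedUnder_of ⟨c * C, fun n => by
      simpa using mul_le_mul_of_nonneg_left ((abs_le.1 (avgSeq_abs_le hC n)).2) hc.le⟩
  · obtain ⟨C, hC⟩ := x.2
    refine (isBoundedUnder_of ⟨c * (-C), fun n => ?_⟩).isCoboundedUnder_le
    simpa using mul_le_mul_of_nonneg_left ((abs_le.1 (avgSeq_abs_le hC n)).1) hc.le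

lemma N_zero : N 0 = 0 := by
  have h0 : avgSeq ((0 : bddSub) : ℕ → ℝ) = fun _ => (0 : ℝ) := by
    funext n; simp [avgSeq]
  rw [N, h0, limsup_const]

def pmap0 : bddSub →ₗ.[ℝ] ℝ := ⟨⊥, 0⟩

lemma exists_L : ∃ L : bddSub →ₗ[ℝ] ℝ, ∀ x, L x ≤ N x := by
  obtain ⟨L, -, hL⟩ := exists_extension_of_le_sublinear pmap0 N
    (fun c hc x => N_smul c hc x) N_add
    (fun x => by
      have hx : (x : bddSub) = 0 := (Submodule.mem_bot ℝ).mp x.2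
      have : pmap0 x = 0 := rfl
      rw [this, hx, N_zero])
  exact ⟨L, hL⟩



lemma L_bound (L : bddSub →ₗ[ℝ] ℝ) (hL : ∀ x, L x ≤ N x) {x : bddSub} {C : ℝ}
    (h : ∀ n, |x.1 n| ≤ C) : |L x| ≤ C := by
  have h1 : L x ≤ C := (hL x).trans (N_le h)
  have h2 : L (-x) ≤ C := (hL (-x)).trans (N_le (x := -x) (fun n => by
    simpa using h n))
  rw [map_neg] at h2
  rw [abs_le]; constructor <;> linarith

def shiftBdd (x : bddSub) : bddSub :=
  ⟨fun n => x.1 (n + 1), by obtain ⟨C, hC⟩ := x.2; exact ⟨C, fun n => hC (n + 1)⟩⟩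

lemma tendsto_avg_shift (x : bddSub) :
    Filter.Tendsto (avgSeq ((shiftBdd x - x) : bddSub).1) atTop (nhds 0) := by
  obtain ⟨C, hC⟩ := x.2
  have havg : avgSeq ((shiftBdd x - x) : bddSub).1
      = fun n => (x.1 (n + 1) - x.1 0) / ((n : ℝ) + 1) := by
    funext n
    have hsum : ∑ k ∈ Finset.range (n + 1), (x.1 (k + 1) - x.1 k) = x.1 (n + 1) - x.1 0 :=
      Finset.sum_range_sub x.1 (n + 1)
    show (∑ k ∈ Finset.range (n + 1), ((shiftBdd x - x) : bddSub).1 k) / ((n : ℝ) + 1) = _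
    rw [show ((shiftBdd x - x) : bddSub).1 = fun k => x.1 (k + 1) - x.1 k from rfl]
    rw [hsum]
  rw [havg]
  apply squeeze_zero_norm (a := fun n : ℕ => (2 * C) / ((n : ℝ) + 1))
  · intro n
    rw [Real.norm_eq_abs, abs_div, abs_of_pos (by positivity : (0:ℝ) < (n:ℝ)+1),
      div_le_div_iff_of_pos_right (by positivity)]
    calc |x.1 (n + 1) - x.1 0| ≤ |x.1 (n+1)| + |x.1 0| := abs_sub _ _
      _ ≤ 2 * C := by linarith [hC (n+1), hC 0]
  · have := (tendsto_const_div_atTop_nhds_zero_nat (2 * C)).comp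
      (tendsto_add_atTop_nat 1)
    refine this.congr fun n => ?_
    simp [Function.comp]

lemma N_shift_sub (x : bddSub) : N (shiftBdd x - x) = 0 :=
  (tendsto_avg_shift x).limsup_eq

lemma N_sub_shift (x : bddSub) : N (x - shiftBdd x) = 0 := by
  have e : x - shiftBdd x = -(shiftBdd x - x) := (neg_sub _ _).symm
  have havg : avgSeq ((x - shiftBdd x : bddSub) : ℕ → ℝ)
      = fun n => -(avgSeq ((shiftBdd x - x) : bddSub).1 n) := by
    rw [e]; funext n
    show (∑ k ∈ Finset.range (n + 1), (-(shiftBdd x - x) : bddSub).1 k) / ((n : ℝ) + 1) = _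
    rw [show (-(shiftBdd x - x) : bddSub).1 = fun k => -(((shiftBdd x - x) : bddSub).1 k) from rfl]
    rw [Finset.sum_neg_distrib]
    show -(∑ k ∈ Finset.range (n+1), ((shiftBdd x - x) : bddSub).1 k) / ((n : ℝ) + 1) = _
    rw [neg_div]
    rfl
  rw [N, havg]
  have : Filter.Tendsto (fun n => -(avgSeq ((shiftBdd x - x) : bddSub).1 n)) atTop (nhds 0) := by
    simpa using (tendsto_avg_shift x).neg
  exact this.limsup_eq

lemma L_shift (L : bddSub →ₗ[ℝ] ℝ) (hL : ∀ x, L x ≤ N x) (x : bddSub) :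
    L (shiftBdd x) = L x := by
  have h1 : L (shiftBdd x - x) ≤ 0 := (hL _).trans_eq (N_shift_sub x)
  have h2 : L (x - shiftBdd x) ≤ 0 := (hL _).trans_eq (N_sub_shift x)
  rw [map_sub] at h1 h2
  linarith

lemma L_nonneg (L : bddSub →ₗ[ℝ] ℝ) (hL : ∀ x, L x ≤ N x) (x : bddSub)
    (h : ∀ n, 0 ≤ x.1 n) : 0 ≤ L x := by
  have h2 : L (-x) ≤ N (-x) := hL (-x)
  have hN : N (-x) ≤ 0 := by
    refine limsup_le_of_le (bddBelow_avg (-x)).isCoboundedUnder_le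
      (Eventually.of_forall fun n => ?_)
    show avgSeq ((-x : bddSub) : ℕ → ℝ) n ≤ 0
    rw [show ((-x : bddSub) : ℕ → ℝ) = fun k => -(x.1 k) from rfl]
    unfold avgSeq
    apply div_nonpos_of_nonpos_of_nonneg
    · rw [Finset.sum_neg_distrib]
      simp only [neg_nonpos]
      exact Finset.sum_nonneg fun k _ => h k
    · positivity
  rw [map_neg] at h2
  linarith

lemma L_one (L : bddSub →ₗ[ℝ] ℝ) (hL : ∀ x, L x ≤ N x) :
    L ⟨fun _ => 1, ⟨1, fun n => by norm_num⟩⟩ = 1 := by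
  set o : bddSub := ⟨fun _ => 1, ⟨1, fun n => by norm_num⟩⟩
  have havg : avgSeq (o : ℕ → ℝ) = fun _ => (1 : ℝ) := by
    funext n
    show (∑ _k ∈ Finset.range (n + 1), (1:ℝ)) / ((n : ℝ) + 1) = 1
    rw [Finset.sum_const, Finset.card_range, nsmul_eq_mul, mul_one]
    push_cast; field_simp
  have hN1 : N o = 1 := by rw [N, havg, limsup_const]
  have hNm : N (-o) = -1 := by
    have : avgSeq ((-o : bddSub) : ℕ → ℝ) = fun _ => (-1 : ℝ) := by
      funext n
      rw [show ((-o : bddSub) : ℕ → ℝ) = fun _ => (-1 : ℝ) from rfl]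
      show (∑ _k ∈ Finset.range (n + 1), (-1:ℝ)) / ((n : ℝ) + 1) = -1
      rw [Finset.sum_const, Finset.card_range, nsmul_eq_mul, mul_neg_one]
      push_cast; field_simp
    rw [N, this, limsup_const]
  have h1 : L o ≤ 1 := (hL o).trans_eq hN1
  have h2 : L (-o) ≤ -1 := (hL (-o)).trans_eq hNm
  rw [map_neg] at h2
  linarith

end BLConstruction

open BLConstruction in
theorem exists_banachLimit : Nonempty BanachLimit := by
  classical
  obtain ⟨L, hL⟩ := exists_L
  refine ⟨⟨fun x => if h : IsBddSeq x then L ⟨x, h⟩ else 0, ?_, ?_, ?_, ?_, ?_⟩⟩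
  · intro x y hx hy
    have hxy : IsBddSeq (fun n => x n + y n) := bddSub.add_mem hx hy
    beta_reduce
    rw [dif_pos hxy, dif_pos hx, dif_pos hy]
    have : (⟨fun n => x n + y n, hxy⟩ : bddSub) = ⟨x, hx⟩ + ⟨y, hy⟩ := rfl
    rw [this, map_add]
  · intro c x hx
    have hcx : IsBddSeq (fun n => c * x n) := bddSub.smul_mem c hx
    beta_reduce
    rw [dif_pos hcx, dif_pos hx]
    have : (⟨fun n => c * x n, hcx⟩ : bddSub) = c • ⟨x, hx⟩ := rfl
    rw [this, _root_.map_smul, smul_eq_mul]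
  · intro x hx hpos
    beta_reduce
    rw [dif_pos hx]
    exact L_nonneg L hL _ hpos
  · intro x hx
    have hsx : IsBddSeq (fun n => x (n + 1)) := by
      obtain ⟨C, hC⟩ := hx; exact ⟨C, fun n => hC (n + 1)⟩
    beta_reduce
    rw [dif_pos hsx, dif_pos hx]
    exact L_shift L hL ⟨x, hx⟩
  · have h1 : IsBddSeq (fun _ => (1:ℝ)) := ⟨1, fun n => by norm_num⟩
    beta_reduce
    rw [dif_pos h1]
    exact L_one L hL

namespace StmtAux

open Filter

/-! ### Generic facts about Banach limits -/

lemma B_const (B : BanachLimit) (c : ℝ) : B.toFun (fun _ => c) = c := by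
  have h1 : IsBddSeq (fun _ => (1 : ℝ)) := ⟨1, fun n => by norm_num⟩
  have := B.map_smul c (fun _ => 1) h1
  simp only [mul_one] at this
  rw [this, B.norm_one, mul_one]

lemma B_neg (B : BanachLimit) (x : ℕ → ℝ) (hx : IsBddSeq x) :
    B.toFun (fun n => -x n) = -B.toFun x := by
  have := B.map_smul (-1) x hx
  simp only [neg_one_mul] at this
  rw [this]

lemma B_sub (B : BanachLimit) (x y : ℕ → ℝ) (hx : IsBddSeq x) (hy : IsBddSeq y) :
    B.toFun (fun n => x n - y n) = B.toFun x - B.toFun y := by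
  have hny : IsBddSeq (fun n => -y n) := by
    obtain ⟨C, hC⟩ := hy; exact ⟨C, fun n => by simpa using hC n⟩
  have e : (fun n => x n - y n) = fun n => x n + (fun m => -y m) n := by
    funext n; ring
  rw [e, B.map_add x _ hx hny, B_neg B y hy]
  ring

lemma B_abs_le (B : BanachLimit) {x : ℕ → ℝ} {C : ℝ} (hx : ∀ n, |x n| ≤ C) :
    |B.toFun x| ≤ C := by
  have hbx : IsBddSeq x := ⟨C, hx⟩
  have hcb : IsBddSeq (fun _ => C) := ⟨|C|, fun n => le_refl |C|⟩
  have h1 : B.toFun (fun n => (fun _ => C) n - x n) = C - B.toFun x := by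
    rw [B_sub B _ x hcb hbx, B_const]
  have h2 : B.toFun (fun n => x n - (fun _ => -C) n) = B.toFun x + C := by
    rw [B_sub B x _ hbx ⟨|C|, fun n => by simpa using neg_abs_le C⟩, B_const]
    ring
  have h3 : 0 ≤ C - B.toFun x := by
    rw [← h1]
    refine B.nonneg _ ⟨C + C, fun n => ?_⟩ (fun n => by linarith [(abs_le.1 (hx n)).2])
    have := abs_le.1 (hx n)
    rw [abs_le]; constructor <;> simp <;> linarith
  have h4 : 0 ≤ B.toFun x + C := by
    rw [← h2]
    refine B.nonneg _ ⟨C + C, fun n => ?_⟩ (fun n => by simp; linarith [(abs_le.1 (hx n)).1])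
    have := abs_le.1 (hx n)
    rw [abs_le]; constructor <;> simp <;> linarith
  rw [abs_le]; constructor <;> linarith

end StmtAux

namespace StmtAux
open unitInterval Filter

variable {p : ℕ → ℝ} {fn : ℕ → unitInterval → unitInterval}

lemma psummable (hp : ∀ n, 0 ≤ p n) (hpsum : ∑' n, p n = 1) : Summable p := by
  by_contra h
  rw [tsum_eq_zero_of_not_summable h] at hpsum
  norm_num at hpsum

section Tfacts

variable (hp : ∀ n, 0 ≤ p n) (hP : Summable p)
include hp hP

lemma summable_mul {h : unitInterval → ℝ} {C : ℝ} (hb : ∀ x, |h x| ≤ C) (x : unitInterval) :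
    Summable (fun n => p n * h (fn n x)) := by
  apply Summable.of_abs
  apply Summable.of_nonneg_of_le (fun n => abs_nonneg _) (fun n => ?_) (hP.mul_right C)
  rw [abs_mul, abs_of_nonneg (hp n)]
  exact mul_le_mul_of_nonneg_left (hb _) (hp n)

lemma T_abs_le (hpsum : ∑' n, p n = 1) {h : unitInterval → ℝ} {C : ℝ}
    (hb : ∀ x, |h x| ≤ C) (x : unitInterval) : |Tseq p fn h x| ≤ C := by
  have hs := summable_mul (fn := fn) hp hP hb x
  have habs : Summable (fun n => |p n * h (fn n x)|) := hs.abs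
  calc |Tseq p fn h x| ≤ ∑' n, |p n * h (fn n x)| := by
        have := norm_tsum_le_tsum_norm (f := fun n => p n * h (fn n x))
          (by simpa only [Real.norm_eq_abs] using habs)
        simpa only [Real.norm_eq_abs, Tseq] using this
    _ ≤ ∑' n, p n * C := by
        refine Summable.tsum_le_tsum (fun n => ?_) habs (hP.mul_right C)
        rw [abs_mul, abs_of_nonneg (hp n)]
        exact mul_le_mul_of_nonneg_left (hb _) (hp n)
    _ = C := by rw [tsum_mul_right, hpsum, one_mul]

lemma T_iter_abs_le (hpsum : ∑' n, p n = 1) {h : unitInterval → ℝ} {C : ℝ}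
    (hb : ∀ x, |h x| ≤ C) : ∀ l x, |(Tseq p fn)^[l] h x| ≤ C := by
  intro l
  induction l with
  | zero => simpa using hb
  | succ l ih =>
      intro x
      rw [Function.iterate_succ_apply']
      exact T_abs_le hp hP hpsum ih x

lemma T_add {h1 h2 : unitInterval → ℝ} {C1 C2 : ℝ}
    (hb1 : ∀ x, |h1 x| ≤ C1) (hb2 : ∀ x, |h2 x| ≤ C2) (x : unitInterval) :
    Tseq p fn (fun y => h1 y + h2 y) x = Tseq p fn h1 x + Tseq p fn h2 x := by
  unfold Tseq
  rw [← Summable.tsum_add (summable_mul hp hP hb1 x) (summable_mul hp hP hb2 x)]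
  exact tsum_congr fun n => by ring

lemma T_iter_add (hpsum : ∑' n, p n = 1) {h1 h2 : unitInterval → ℝ} {C1 C2 : ℝ}
    (hb1 : ∀ x, |h1 x| ≤ C1) (hb2 : ∀ x, |h2 x| ≤ C2) :
    ∀ k x, (Tseq p fn)^[k] (fun y => h1 y + h2 y) x
      = (Tseq p fn)^[k] h1 x + (Tseq p fn)^[k] h2 x := by
  intro k
  induction k generalizing h1 h2 C1 C2 with
  | zero => intro x; simp
  | succ k ih =>
      intro x
      rw [Function.iterate_succ_apply, Function.iterate_succ_apply,
        Function.iterate_succ_apply]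
      have e : Tseq p fn (fun y => h1 y + h2 y) = fun y => Tseq p fn h1 y + Tseq p fn h2 y :=
        funext fun y => T_add hp hP hb1 hb2 y
      rw [e]
      exact ih (T_abs_le hp hP hpsum hb1) (T_abs_le hp hP hpsum hb2) x

lemma T_finsum {k : ℕ} {H : ℕ → unitInterval → ℝ}
    (hb : ∀ l, ∃ C, ∀ x, |H l x| ≤ C) (x : unitInterval) :
    Tseq p fn (fun y => ∑ l ∈ Finset.range k, H l y) x
      = ∑ l ∈ Finset.range k, Tseq p fn (H l) x := by
  unfold Tseq
  have e : ∀ n, p n * (∑ l ∈ Finset.range k, H l (fn n x))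
      = ∑ l ∈ Finset.range k, p n * H l (fn n x) := fun n => Finset.mul_sum _ _ _
  rw [tsum_congr e]
  exact Summable.tsum_finsetSum fun l _ => by
    obtain ⟨C, hC⟩ := hb l
    exact summable_mul hp hP hC x

end Tfacts

end StmtAux

namespace StmtAux
open unitInterval Filter

variable {p : ℕ → ℝ}

section Interchange

variable (hp : ∀ n, 0 ≤ p n) (hP : Summable p) (hpsum : ∑' n, p n = 1)
include hp hP hpsum

/-- A Banach limit commutes with `∑' n, p n * ·` for uniformly bounded arrays. -/
lemma B_tsum (B : BanachLimit) {u : ℕ → ℕ → ℝ} {C : ℝ}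
    (hu : ∀ n k, |u n k| ≤ C) :
    B.toFun (fun k => ∑' n, p n * u n k) = ∑' n, p n * B.toFun (u n) := by
  have hC : 0 ≤ C := (abs_nonneg _).trans (hu 0 0)
  set y : ℕ → ℝ := fun k => ∑' n, p n * u n k with hy
  have hsum : ∀ k, Summable (fun n => p n * u n k) := by
    intro k
    apply Summable.of_abs
    apply Summable.of_nonneg_of_le (fun n => abs_nonneg _) (fun n => ?_) (hP.mul_right C)
    rw [abs_mul, abs_of_nonneg (hp n)]
    exact mul_le_mul_of_nonneg_left (hu n k) (hp n)
  have hyb : ∀ k, |y k| ≤ C := by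
    intro k
    have habs : Summable (fun n => |p n * u n k|) := (hsum k).abs
    calc |y k| ≤ ∑' n, |p n * u n k| := by
          have := norm_tsum_le_tsum_norm (f := fun n => p n * u n k)
            (by simpa only [Real.norm_eq_abs] using habs)
          simpa only [Real.norm_eq_abs] using this
      _ ≤ ∑' n, p n * C := by
          refine Summable.tsum_le_tsum (fun n => ?_) habs (hP.mul_right C)
          rw [abs_mul, abs_of_nonneg (hp n)]
          exact mul_le_mul_of_nonneg_left (hu n k) (hp n)
      _ = C := by rw [tsum_mul_right, hpsum, one_mul]
  set S : ℕ → ℕ → ℝ := fun N k => ∑ n ∈ Finset.range N, p n * u n k with hS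
  set R : ℕ → ℕ → ℝ := fun N k => ∑' n, p (n + N) * u (n + N) k with hR
  have hRb : ∀ N k, |R N k| ≤ (∑' n, p (n + N)) * C := by
    intro N k
    have hsum' : Summable (fun n => p (n + N) * u (n + N) k) :=
      ((summable_nat_add_iff N).2 (hsum k))
    have hptail : Summable (fun n => p (n + N)) := (summable_nat_add_iff N).2 hP
    have habs : Summable (fun n => |p (n + N) * u (n + N) k|) := hsum'.abs
    calc |R N k| ≤ ∑' n, |p (n + N) * u (n + N) k| := by
          have := norm_tsum_le_tsum_norm (f := fun n => p (n + N) * u (n + N) k)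
            (by simpa only [Real.norm_eq_abs] using habs)
          simpa only [Real.norm_eq_abs] using this
      _ ≤ ∑' n, p (n + N) * C := by
          refine Summable.tsum_le_tsum (fun n => ?_) habs (hptail.mul_right C)
          rw [abs_mul, abs_of_nonneg (hp _)]
          exact mul_le_mul_of_nonneg_left (hu _ k) (hp _)
      _ = (∑' n, p (n + N)) * C := tsum_mul_right
  have hSb : ∀ N k, |S N k| ≤ C := by
    intro N k
    calc |S N k| ≤ ∑ n ∈ Finset.range N, |p n * u n k| := Finset.abs_sum_le_sum_abs _ _
      _ ≤ ∑ n ∈ Finset.range N, p n * C := Finset.sum_le_sum fun n _ => by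
          rw [abs_mul, abs_of_nonneg (hp n)]
          exact mul_le_mul_of_nonneg_left (hu n k) (hp n)
      _ ≤ ∑' n, p n * C := Summable.sum_le_tsum _ (fun n _ => mul_nonneg (hp n) hC) (hP.mul_right C)
      _ = C := by rw [tsum_mul_right, hpsum, one_mul]
  have hdecomp : ∀ N, y = fun k => S N k + R N k := by
    intro N
    funext k
    exact ((Summable.sum_add_tsum_nat_add N (hsum k))).symm
  have hBS : ∀ N, B.toFun (S N) = ∑ n ∈ Finset.range N, p n * B.toFun (u n) := by
    intro N
    induction N with
    | zero =>
        have e : S 0 = fun _ => (0 : ℝ) := by funext k; simp [hS]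
        rw [e, B_const]
        simp
    | succ N ih =>
        have e : S (N + 1) = fun k => S N k + p N * u N k := by
          funext k; exact Finset.sum_range_succ _ N
        have hbu : IsBddSeq (u N) := ⟨C, hu N⟩
        have hbpu : IsBddSeq (fun k => p N * u N k) := by
          obtain ⟨D, hD⟩ := hbu
          exact ⟨|p N| * D, fun k => by
            rw [abs_mul]; exact mul_le_mul_of_nonneg_left (hD k) (abs_nonneg _)⟩
        rw [e, B.map_add (S N) _ ⟨C, hSb N⟩ hbpu, ih, B.map_smul _ _ hbu,
          Finset.sum_range_succ]
  have hBR : ∀ N, |B.toFun y - B.toFun (S N)| ≤ (∑' n, p (n + N)) * C := by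
    intro N
    have hRbseq : IsBddSeq (R N) := ⟨(∑' n, p (n + N)) * C, hRb N⟩
    have : B.toFun y = B.toFun (S N) + B.toFun (R N) := by
      conv_lhs => rw [hdecomp N]
      exact B.map_add (S N) (R N) ⟨C, hSb N⟩ hRbseq
    rw [this]
    simpa using B_abs_le B (hRb N)
  -- limit of partial sums
  have hsummable : Summable (fun n => p n * B.toFun (u n)) := by
    apply Summable.of_abs
    apply Summable.of_nonneg_of_le (fun n => abs_nonneg _) (fun n => ?_) (hP.mul_right C)
    rw [abs_mul, abs_of_nonneg (hp n)]
    exact mul_le_mul_of_nonneg_left (B_abs_le B (hu n)) (hp n)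
  have h1 : Tendsto (fun N => B.toFun (S N)) atTop (nhds (B.toFun y)) := by
    rw [← tendsto_sub_nhds_zero_iff]
    apply squeeze_zero_norm (a := fun N => (∑' n, p (n + N)) * C)
    · intro N
      rw [Real.norm_eq_abs, abs_sub_comm]
      exact hBR N
    · have := (tendsto_sum_nat_add p).mul_const C
      simpa using this
  have h2 : Tendsto (fun N => B.toFun (S N)) atTop (nhds (∑' n, p n * B.toFun (u n))) := by
    have := hsummable.hasSum.tendsto_sum_nat
    refine this.congr fun N => (hBS N).symm
  exact tendsto_nhds_unique h1 h2

end Interchange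

end StmtAux

namespace StmtAux
open unitInterval Filter

variable {p : ℕ → ℝ} {fn : ℕ → unitInterval → unitInterval} {g : unitInterval → ℝ}

section Main

variable (hp : ∀ n, 0 ≤ p n) (hP : Summable p) (hpsum : ∑' n, p n = 1)
include hp hP hpsum

lemma sol_telescope {φ : unitInterval → ℝ} {Cφ Cg : ℝ}
    (hφ : ∀ x, |φ x| ≤ Cφ) (hg : ∀ x, |g x| ≤ Cg)
    (hsol : ∀ x, φ x = Tseq p fn φ x + g x) :
    ∀ k x, φ x = (Tseq p fn)^[k] φ x + gkSeq p fn g k x := by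
  intro k
  induction k with
  | zero => intro x; simp [gkSeq]
  | succ k ih =>
      intro x
      have hTφ : ∀ y, |Tseq p fn φ y| ≤ Cφ := fun y => T_abs_le hp hP hpsum hφ y
      have e1 : gkSeq p fn g (k + 1) x = gkSeq p fn g k x + (Tseq p fn)^[k] g x :=
        Finset.sum_range_succ _ k
      have e2 : (Tseq p fn)^[k + 1] φ x = (Tseq p fn)^[k] (Tseq p fn φ) x := by
        rw [Function.iterate_succ_apply]
      have e3 : (Tseq p fn)^[k] (Tseq p fn φ) x + (Tseq p fn)^[k] g x
          = (Tseq p fn)^[k] (fun y => Tseq p fn φ y + g y) x :=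
        (T_iter_add hp hP hpsum hTφ hg k x).symm
      have e4 : (fun y => Tseq p fn φ y + g y) = φ := funext fun y => (hsol y).symm
      have e5 : (Tseq p fn)^[k] (fun y => Tseq p fn φ y + g y) x = (Tseq p fn)^[k] φ x := by
        rw [e4]
      linarith [ih x, e1, e2, e3, e5]

/-- If `φ = B_h + B_*` then `φ` solves the equation. -/
lemma rep_is_sol (B : BanachLimit) {h : unitInterval → ℝ} {Ch CG Cg : ℝ}
    (hh : ∀ x, |h x| ≤ Ch) (hg : ∀ x, |g x| ≤ Cg)
    (hG : ∀ k : ℕ, 1 ≤ k → ∀ x, |gkSeq p fn g k x| ≤ CG) :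
    ∀ x, (fun x => B.toFun (fun m => (Tseq p fn)^[m + 1] h x) +
        B.toFun (fun k => gkSeq p fn g (k + 1) x)) x
      = Tseq p fn (fun x => B.toFun (fun m => (Tseq p fn)^[m + 1] h x) +
        B.toFun (fun k => gkSeq p fn g (k + 1) x)) x + g x := by
  intro x
  set A : unitInterval → ℝ := fun y => B.toFun (fun m => (Tseq p fn)^[m + 1] h y) with hA
  set D : unitInterval → ℝ := fun y => B.toFun (fun k => gkSeq p fn g (k + 1) y) with hD
  have hTh : ∀ m y, |(Tseq p fn)^[m] h y| ≤ Ch := T_iter_abs_le hp hP hpsum hh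
  have hgk1 : ∀ k y, |gkSeq p fn g (k + 1) y| ≤ CG := fun k y =>
    hG (k + 1) (Nat.le_add_left 1 k) y
  have hAb : ∀ y, |A y| ≤ Ch := fun y => B_abs_le B (fun m => hTh (m + 1) y)
  have hDb : ∀ y, |D y| ≤ CG := fun y => B_abs_le B (fun k => hgk1 k y)
  -- Tseq of sum
  have hsplit : Tseq p fn (fun y => A y + D y) x = Tseq p fn A x + Tseq p fn D x :=
    T_add hp hP hAb hDb x
  -- first term
  have hTA : Tseq p fn A x = A x := by
    have := B_tsum hp hP hpsum B (u := fun n m => (Tseq p fn)^[m + 1] h (fn n x))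
      (C := Ch) (fun n m => hTh (m + 1) (fn n x))
    have e1 : Tseq p fn A x = ∑' n, p n * A (fn n x) := rfl
    rw [e1, hA]
    rw [← this]
    have e2 : (fun m => ∑' n, p n * (Tseq p fn)^[m + 1] h (fn n x))
        = fun m => (Tseq p fn)^[m + 1 + 1] h x := by
      funext m
      rw [Function.iterate_succ_apply' (Tseq p fn) (m + 1) h]
      rfl
    rw [e2]
    exact B.shift (fun m => (Tseq p fn)^[m + 1] h x) ⟨Ch, fun m => hTh (m + 1) x⟩
  -- second term
  have hTg : ∀ m y, |(Tseq p fn)^[m] g y| ≤ Cg := T_iter_abs_le hp hP hpsum hg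
  have hTgk : ∀ k, Tseq p fn (gkSeq p fn g (k + 1)) x = gkSeq p fn g (k + 2) x - g x := by
    intro k
    have e1 : Tseq p fn (gkSeq p fn g (k + 1)) x
        = ∑ l ∈ Finset.range (k + 1), Tseq p fn ((Tseq p fn)^[l] g) x :=
      T_finsum (k := k + 1) (H := fun l => (Tseq p fn)^[l] g) hp hP
        (fun l => ⟨Cg, hTg l⟩) x
    have e2 : ∀ l, Tseq p fn ((Tseq p fn)^[l] g) x = (Tseq p fn)^[l + 1] g x := fun l =>
      (Function.iterate_succ_apply' (Tseq p fn) l g ▸ rfl)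
    have e3 : gkSeq p fn g (k + 2) x
        = (∑ l ∈ Finset.range (k + 1), (Tseq p fn)^[l + 1] g x) + g x := by
      have := Finset.sum_range_succ' (fun l => (Tseq p fn)^[l] g x) (k + 1)
      simpa [gkSeq] using this
    rw [e1, Finset.sum_congr rfl (fun l _ => e2 l), e3]
    ring
  have hTD : Tseq p fn D x = D x - g x := by
    have hint := B_tsum hp hP hpsum B (u := fun n k => gkSeq p fn g (k + 1) (fn n x))
      (C := CG) (fun n k => hgk1 k (fn n x))
    have e1 : Tseq p fn D x = ∑' n, p n * D (fn n x) := rfl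
    rw [e1, hD, ← hint]
    have e2 : (fun k => ∑' n, p n * gkSeq p fn g (k + 1) (fn n x))
        = fun k => gkSeq p fn g (k + 2) x - g x := by
      funext k
      have : (∑' n, p n * gkSeq p fn g (k + 1) (fn n x))
          = Tseq p fn (gkSeq p fn g (k + 1)) x := rfl
      rw [this, hTgk k]
    rw [e2]
    have hbk2 : IsBddSeq (fun k => gkSeq p fn g (k + 2) x) :=
      ⟨CG, fun k => hG (k + 2) (by omega) x⟩
    have hbcg : IsBddSeq (fun _ => g x) := ⟨Cg, fun _ => hg x⟩
    rw [B_sub B _ _ hbk2 hbcg, B_const]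
    have hshift := B.shift (fun k => gkSeq p fn g (k + 1) x)
      ⟨CG, fun k => hgk1 k x⟩
    have e3 : (fun k => gkSeq p fn g (k + 1 + 1) x)
        = fun k => gkSeq p fn g (k + 2) x := rfl
    rw [e3] at hshift
    rw [hshift]
  -- conclude
  show A x + D x = Tseq p fn (fun y => A y + D y) x + g x
  rw [hsplit, hTA, hTD]
  ring

/-- A representation `B_h + B_*` is bounded. -/
lemma rep_bdd (B : BanachLimit) {h : unitInterval → ℝ} {Ch CG : ℝ}
    (hh : ∀ x, |h x| ≤ Ch)
    (hG : ∀ k : ℕ, 1 ≤ k → ∀ x, |gkSeq p fn g k x| ≤ CG) :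
    ∀ x, |B.toFun (fun m => (Tseq p fn)^[m + 1] h x) +
        B.toFun (fun k => gkSeq p fn g (k + 1) x)| ≤ Ch + CG := by
  intro x
  have hTh : ∀ m y, |(Tseq p fn)^[m] h y| ≤ Ch := T_iter_abs_le hp hP hpsum hh
  have h1 : |B.toFun (fun m => (Tseq p fn)^[m + 1] h x)| ≤ Ch :=
    B_abs_le B (fun m => hTh (m + 1) x)
  have h2 : |B.toFun (fun k => gkSeq p fn g (k + 1) x)| ≤ CG :=
    B_abs_le B (fun k => hG (k + 1) (Nat.le_add_left 1 k) x)
  calc |_ + _| ≤ _ := abs_add_le _ _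
    _ ≤ Ch + CG := add_le_add h1 h2

end Main
end StmtAux

/-- The equation `φ(x) = Σ_n p_n φ(f_n(x)) + g(x)` has a bounded
solution iff the family `{g_k : k ≥ 1}` is bounded in the supremum norm; moreover,
in that case a bounded `φ` is a solution iff `φ = B_h + B_*` for some Banach limit
`B` and some bounded `h`. -/
theorem stmt_13 (fn : ℕ → unitInterval → unitInterval)
    (hfn0 : ∀ n, fn n 0 = 0) (hfn1 : ∀ n, fn n 1 = 1)
    (p : ℕ → ℝ) (hp : ∀ n, 0 ≤ p n) (hpsum : ∑' n, p n = 1)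
    (g : unitInterval → ℝ) (hgbd : ∃ C : ℝ, ∀ x, |g x| ≤ C)
    (hg0 : g 0 = 0) (hg1 : g 1 = 0) :
    ((∃ φ : unitInterval → ℝ, (∃ C : ℝ, ∀ x, |φ x| ≤ C) ∧
        ∀ x, φ x = (∑' n, p n * φ (fn n x)) + g x) ↔
      (∃ C : ℝ, ∀ k : ℕ, 1 ≤ k → ∀ x, |gkSeq p fn g k x| ≤ C)) ∧
    ((∃ C : ℝ, ∀ k : ℕ, 1 ≤ k → ∀ x, |gkSeq p fn g k x| ≤ C) →
      ∀ φ : unitInterval → ℝ, (∃ C : ℝ, ∀ x, |φ x| ≤ C) →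
        ((∀ x, φ x = (∑' n, p n * φ (fn n x)) + g x) ↔
          ∃ B : BanachLimit, ∃ h : unitInterval → ℝ, (∃ C : ℝ, ∀ x, |h x| ≤ C) ∧
            φ = fun x => B.toFun (fun m => (Tseq p fn)^[m + 1] h x) +
              B.toFun (fun k => gkSeq p fn g (k + 1) x))) := by
  classical
  obtain ⟨Cg, hgC⟩ := hgbd
  have hP : Summable p := StmtAux.psummable hp hpsum
  obtain ⟨B0⟩ := exists_banachLimit
  constructor
  · constructor
    · rintro ⟨φ, ⟨Cφ, hφC⟩, hsol⟩
      refine ⟨Cφ + Cφ, fun k _ x => ?_⟩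
      have ht := StmtAux.sol_telescope hp hP hpsum hφC hgC hsol k x
      have h1 : |(Tseq p fn)^[k] φ x| ≤ Cφ := StmtAux.T_iter_abs_le hp hP hpsum hφC k x
      have e : gkSeq p fn g k x = φ x - (Tseq p fn)^[k] φ x := by linarith
      rw [e]
      calc |φ x - (Tseq p fn)^[k] φ x| ≤ |φ x| + |(Tseq p fn)^[k] φ x| := abs_sub _ _
        _ ≤ Cφ + Cφ := add_le_add (hφC x) h1
    · rintro ⟨CG, hG⟩
      have hzero : ∀ x : unitInterval, |(fun _ : unitInterval => (0:ℝ)) x| ≤ 0 :=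
        fun x => by simp
      refine ⟨fun x => B0.toFun (fun m => (Tseq p fn)^[m + 1] (fun _ => (0:ℝ)) x) +
          B0.toFun (fun k => gkSeq p fn g (k + 1) x),
        ⟨0 + CG, StmtAux.rep_bdd hp hP hpsum B0 hzero hG⟩, ?_⟩
      exact fun x => StmtAux.rep_is_sol hp hP hpsum B0 hzero hgC hG x
  · rintro ⟨CG, hG⟩ φ ⟨Cφ, hφC⟩
    constructor
    · intro hsol
      refine ⟨B0, φ, ⟨Cφ, hφC⟩, ?_⟩
      funext x
      have ht : ∀ m, (Tseq p fn)^[m + 1] φ x = φ x - gkSeq p fn g (m + 1) x := fun m => by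
        have := StmtAux.sol_telescope hp hP hpsum hφC hgC hsol (m + 1) x
        linarith
      have e : (fun m => (Tseq p fn)^[m + 1] φ x)
          = fun m => (fun _ : ℕ => φ x) m - (fun m => gkSeq p fn g (m + 1) x) m := funext ht
      rw [e, StmtAux.B_sub B0 _ _ ⟨|φ x|, fun _ => le_refl _⟩
        ⟨CG, fun m => hG (m + 1) (Nat.le_add_left 1 m) x⟩, StmtAux.B_const]
      ring
    · rintro ⟨B, h, ⟨Ch, hhC⟩, rfl⟩
      exact fun x => StmtAux.rep_is_sol hp hP hpsum B hhC hgC hG x
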